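/- For x > 0, the exponential integral satisfies the Abramowitz–Stegun bounds: (1/2)·e^{−x}·ln(1 + 2/x) ≤ −Ei(−x) ≤ e^{−x}·ln(1 + 1/x), where Ei(−x) = −∫_x^∞ e^{−t}/t dt. -/

import Mathlib

open Real MeasureTheory

-- log lower bound: 1/(t+1) ≤ log(t+1) - log t for t > 0
private lemma log_diff_lower (t : ℝ) (ht : 0 < t) : 1 / (t + 1) ≤ Real.log (t + 1) - Real.log t := by
  have h1 : (0:ℝ) < t + 1 := by linarith
  have h := Real.log_le_sub_one_of_pos (show (0:ℝ) < t / (t+1) by positivity)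
  rw [Real.log_div (ne_of_gt ht) (ne_of_gt h1)] at h
  have : t / (t + 1) - 1 = -(1 / (t+1)) := by field_simp; ring
  linarith [h.trans_eq this]

-- log v ≤ (v - v⁻¹)/2 for v ≥ 1
private lemma log_le_sinh (v : ℝ) (hv : 1 ≤ v) : Real.log v ≤ (v - v⁻¹) / 2 := by
  have h0 : (0:ℝ) < v := by linarith
  rw [← Real.sinh_log h0]
  rcases eq_or_lt_of_le (Real.log_nonneg hv) with h | h
  · rw [← h]; simp
  · exact (Real.self_lt_sinh_iff.mpr h).le

-- log upper bound:  log(t+2) - log t ≤ 2(t+1)/(t(t+2)) for t > 0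
private lemma log_diff_upper (t : ℝ) (ht : 0 < t) :
    Real.log (t + 2) - Real.log t ≤ 2 * (t + 1) / (t * (t + 2)) := by
  have h2 : (0:ℝ) < t + 2 := by linarith
  have h1 : (0:ℝ) < t + 1 := by linarith
  set v := Real.sqrt ((t+2)/t) with hv
  have hvpos : 0 < v := Real.sqrt_pos.mpr (by positivity)
  have hv1 : 1 ≤ v := by
    rw [hv, show (1:ℝ) = Real.sqrt 1 by simp]
    exact Real.sqrt_le_sqrt (by rw [le_div_iff₀ ht]; linarith)
  have hsq : v ^ 2 = (t+2)/t := Real.sq_sqrt (by positivity)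
  have hlog : Real.log (t + 2) - Real.log t = 2 * Real.log v := by
    rw [hv, Real.log_sqrt (by positivity), ← Real.log_div (ne_of_gt h2) (ne_of_gt ht)]
    ring
  -- v ≥ (t+2)/(t+1)
  have hvge : (t + 2) / (t + 1) ≤ v := by
    rw [hv]
    rw [show (t+2)/(t+1) = Real.sqrt (((t+2)/(t+1))^2) by
      rw [Real.sqrt_sq (by positivity)]]
    apply Real.sqrt_le_sqrt
    rw [div_pow, div_le_div_iff₀ (by positivity) ht]
    nlinarith
  have key : Real.log v ≤ (v - v⁻¹) / 2 := log_le_sinh v hv1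
  -- (v - v⁻¹) = (v^2-1)/v = (2/t)/v ≤ (2/t)·(t+1)/(t+2)
  have hvinv : v - v⁻¹ = (2/t) / v := by
    have h' : v^2 * t = t + 2 := by rw [hsq]; field_simp
    field_simp
    linear_combination h'
  have hbound : (2/t) / v ≤ 2 * (t+1) / (t * (t+2)) := by
    rw [div_le_iff₀ hvpos]
    calc (2:ℝ)/t = (2 * (t+1) / (t * (t+2))) * ((t+2)/(t+1)) := by field_simp
    _ ≤ (2 * (t+1) / (t * (t+2))) * v := by
        apply mul_le_mul_of_nonneg_left hvge (by positivity)
  rw [hlog]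
  nlinarith [key, hvinv, hbound]

-- FTC helper
private lemma ftc_aux (c x : ℝ) (hc : 0 < c) (hx : 0 < x) :
    IntegrableOn (fun t => Real.exp (-t) * ((Real.log (t+c) - Real.log t)/c + 1/(t*(t+c)))) (Set.Ioi x) ∧
    ∫ t in Set.Ioi x, Real.exp (-t) * ((Real.log (t+c) - Real.log t)/c + 1/(t*(t+c)))
      = Real.exp (-x) * (Real.log (x+c) - Real.log x) / c := by
  set F : ℝ → ℝ := fun t => -(Real.exp (-t) * (Real.log (t+c) - Real.log t) / c) with hF
  set F' : ℝ → ℝ := fun t => Real.exp (-t) * ((Real.log (t+c) - Real.log t)/c + 1/(t*(t+c))) with hF'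
  have hderiv : ∀ t ∈ Set.Ici x, HasDerivAt F (F' t) t := by
    intro t ht
    have htpos : 0 < t := lt_of_lt_of_le hx ht
    have htc : 0 < t + c := by linarith
    have h1 : HasDerivAt (fun t : ℝ => Real.exp (-t)) (Real.exp (-t) * (-1)) t :=
      ((hasDerivAt_id t).neg.exp)
    have h2 : HasDerivAt (fun t : ℝ => Real.log (t + c)) (1 / (t + c)) t := by
      have := ((hasDerivAt_id t).add_const c).log (ne_of_gt htc)
      simpa using this
    have h3 : HasDerivAt Real.log t⁻¹ t := Real.hasDerivAt_log (ne_of_gt htpos)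
    have h4 := ((h1.mul (h2.sub h3)).div_const c).neg
    refine HasDerivAt.congr_deriv h4 ?_
    symm
    have h5 : 1/(t+c) - t⁻¹ = -(c * (1 / (t*(t+c)))) := by
      rw [inv_eq_one_div]
      rw [div_sub_div _ _ (ne_of_gt htc) (ne_of_gt htpos)]
      rw [show (1:ℝ)*t - (t+c)*1 = -c by ring]
      rw [neg_div, mul_one_div, mul_comm]
    rw [h5]
    have halg : ∀ e L k : ℝ, -((e * -1 * L + e * -(c * k)) / c) = e * (L / c + k) := by
      intro e L k
      field_simp
      ring
    exact (halg (Real.exp (-t)) (Real.log (t+c) - Real.log t) (1/(t*(t+c)))).symm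
  have hpos : ∀ t ∈ Set.Ioi x, 0 ≤ F' t := by
    intro t ht
    have htpos : 0 < t := hx.trans ht
    have hlog : Real.log t ≤ Real.log (t + c) :=
      Real.log_le_log htpos (by linarith)
    have : 0 ≤ (Real.log (t+c) - Real.log t)/c + 1/(t*(t+c)) := by
      have h1 : (0:ℝ) ≤ (Real.log (t+c) - Real.log t)/c := by
        apply div_nonneg (by linarith) hc.le
      have h2 : (0:ℝ) ≤ 1/(t*(t+c)) := by positivity
      linarith
    positivity
  have htend : Filter.Tendsto F Filter.atTop (nhds 0) := by
    have h1 : Filter.Tendsto (fun t : ℝ => Real.exp (-t)) Filter.atTop (nhds 0) := by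
      simpa using Real.tendsto_exp_neg_atTop_nhds_zero
    have h2 : Filter.Tendsto (fun t : ℝ => Real.log (t+c) - Real.log t) Filter.atTop (nhds 0) := by
      have hq : Filter.Tendsto (fun t : ℝ => 1 + c / t) Filter.atTop (nhds 1) := by
        have h0 : Filter.Tendsto (fun t : ℝ => c / t) Filter.atTop (nhds 0) := by
          simpa [div_eq_mul_inv] using (tendsto_inv_atTop_zero (𝕜 := ℝ)).const_mul c
        simpa using h0.const_add 1
      have hlog : Filter.Tendsto (fun t : ℝ => Real.log (1 + c / t)) Filter.atTop (nhds 0) := by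
        have := (Real.continuousAt_log one_ne_zero).tendsto.comp hq
        simpa [Function.comp_def] using this
      apply hlog.congr'
      filter_upwards [Filter.eventually_gt_atTop 0] with t ht
      rw [show (1 : ℝ) + c / t = (t + c)/t by field_simp, Real.log_div (by positivity) (ne_of_gt ht)]
    have := ((h1.mul h2).div_const c).neg
    simpa using this
  constructor
  · exact integrableOn_Ioi_deriv_of_nonneg' hderiv hpos htend
  · have := integral_Ioi_of_hasDerivAt_of_nonneg' hderiv hpos htend
    rw [this, hF]
    ring

theorem stmt_11 (x : ℝ) (hx : 0 < x)
    (negEi : ℝ → ℝ)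
    (hEi : ∀ u : ℝ, 0 < u → negEi u = ∫ t in Set.Ioi u, Real.exp (-t) / t) :
    (1 / 2) * Real.exp (-x) * Real.log (1 + 2 / x) ≤ negEi x ∧
    negEi x ≤ Real.exp (-x) * Real.log (1 + 1 / x) := by
  rw [hEi x hx]
  obtain ⟨hint1, hval1⟩ := ftc_aux 1 x one_pos hx
  obtain ⟨hint2, hval2⟩ := ftc_aux 2 x two_pos hx
  -- pointwise bounds on Ioi x
  have hub : ∀ t ∈ Set.Ioi x, Real.exp (-t) / t ≤
      Real.exp (-t) * ((Real.log (t+1) - Real.log t)/1 + 1/(t*(t+1))) := by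
    intro t ht
    have htpos : 0 < t := hx.trans ht
    have h := log_diff_lower t htpos
    have : 1/t ≤ (Real.log (t+1) - Real.log t)/1 + 1/(t*(t+1)) := by
      have : (1:ℝ)/t = 1/(t+1) + 1/(t*(t+1)) := by field_simp
      rw [this, div_one]
      linarith
    calc Real.exp (-t) / t = Real.exp (-t) * (1/t) := by ring
    _ ≤ _ := mul_le_mul_of_nonneg_left this (Real.exp_nonneg _)
  have hlb : ∀ t ∈ Set.Ioi x,
      Real.exp (-t) * ((Real.log (t+2) - Real.log t)/2 + 1/(t*(t+2))) ≤ Real.exp (-t) / t := by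
    intro t ht
    have htpos : 0 < t := hx.trans ht
    have h := log_diff_upper t htpos
    have : (Real.log (t+2) - Real.log t)/2 + 1/(t*(t+2)) ≤ 1/t := by
      have he : (1:ℝ)/t = (t+1)/(t*(t+2)) + 1/(t*(t+2)) := by field_simp; ring
      rw [he]
      have : (Real.log (t+2) - Real.log t)/2 ≤ (t+1)/(t*(t+2)) := by
        rw [div_le_iff₀ (by norm_num : (0:ℝ) < 2)] at *
        calc Real.log (t+2) - Real.log t ≤ 2*(t+1)/(t*(t+2)) := h
        _ = (t+1)/(t*(t+2)) * 2 := by ring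
      linarith
    calc Real.exp (-t) * _ ≤ Real.exp (-t) * (1/t) :=
      mul_le_mul_of_nonneg_left this (Real.exp_nonneg _)
    _ = Real.exp (-t) / t := by ring
  -- integrability of e^{-t}/t on Ioi x
  have hmeas : AEStronglyMeasurable (fun t => Real.exp (-t) / t) (volume.restrict (Set.Ioi x)) := by
    apply ContinuousOn.aestronglyMeasurable _ measurableSet_Ioi
    apply ContinuousOn.div (Continuous.continuousOn (by continuity)) continuousOn_id
    intro t ht; exact ne_of_gt (hx.trans ht)
  have hint0 : IntegrableOn (fun t => Real.exp (-t) / t) (Set.Ioi x) := by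
    apply Integrable.mono hint1 hmeas
    filter_upwards [ae_restrict_mem measurableSet_Ioi] with t ht
    have htpos : 0 < t := hx.trans ht
    rw [Real.norm_eq_abs, Real.norm_eq_abs, abs_of_nonneg (by positivity),
      abs_of_nonneg]
    · exact hub t ht
    · have hlog : Real.log t ≤ Real.log (t + 1) := Real.log_le_log htpos (by linarith)
      have h1 : (0:ℝ) ≤ (Real.log (t+1) - Real.log t)/1 := by linarith
      have h2 : (0:ℝ) ≤ 1/(t*(t+1)) := by positivity
      positivity
  constructor
  · have hle := setIntegral_mono_on hint2 hint0 measurableSet_Ioi hlb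
    rw [hval2] at hle
    have heq : Real.exp (-x) * (Real.log (x+2) - Real.log x) / 2
        = 1/2 * Real.exp (-x) * Real.log (1 + 2/x) := by
      rw [show (1:ℝ) + 2/x = (x+2)/x by field_simp, Real.log_div (by positivity) (ne_of_gt hx)]
      ring
    linarith [heq ▸ hle]
  · have hle := setIntegral_mono_on hint0 hint1 measurableSet_Ioi hub
    rw [hval1] at hle
    have heq : Real.exp (-x) * (Real.log (x+1) - Real.log x) / 1
        = Real.exp (-x) * Real.log (1 + 1/x) := by
      rw [show (1:ℝ) + 1/x = (x+1)/x by field_simp, Real.log_div (by positivity) (ne_of_gt hx)]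
      ring
    linarith [heq ▸ hle]
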